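/- Let n ∈ ℕ, let H₀,…,Hₙ be self-adjoint on ℋ, and let f ∈ C^n(ℝ) with f^{(n)} the Fourier transform of a finite complex measure μ. For bounded operators V₁,…,Vₙ on ℋ, define T(V₁,…,Vₙ)ψ = ∫_ℝ ∫_{Δₙ} e^{is₀xH₀} V₁ e^{is₁xH₁} ⋯ Vₙ e^{isₙxHₙ} ψ ds dμ(x). Then T(V₁,…,Vₙ) is a bounded operator with ‖T(V₁,…,Vₙ)‖ ≤ (1/n!) ‖μ‖ ∏_{j=1}^n ‖Vⱼ‖, where ‖μ‖ is the total variation of μ. -/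

import Mathlib

open Complex MeasureTheory Finset

variable {ℋ : Type*} [NormedAddCommGroup ℋ] [InnerProductSpace ℂ ℋ] [CompleteSpace ℋ]

/-- The alternating composition `U₀ ∘ V₁ ∘ U₁ ∘ ⋯ ∘ Vₙ ∘ Uₙ` of bounded operators. -/
noncomputable def moiChain :
    (n : ℕ) → (Fin (n + 1) → (ℋ →L[ℂ] ℋ)) → (Fin n → (ℋ →L[ℂ] ℋ)) → (ℋ →L[ℂ] ℋ)
  | 0, U, _ => U 0
  | n + 1, U, V =>
      (U 0).comp ((V 0).comp (moiChain n (fun i => U i.succ) (fun i => V i.succ)))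

lemma moiChain_norm_apply_le : ∀ (n : ℕ) (U' : Fin (n + 1) → (ℋ →L[ℂ] ℋ))
    (_ : ∀ j ψ, ‖U' j ψ‖ = ‖ψ‖) (V : Fin n → (ℋ →L[ℂ] ℋ)) (ψ : ℋ),
    ‖moiChain n U' V ψ‖ ≤ (∏ j, ‖V j‖) * ‖ψ‖
  | 0, U', hU', V, ψ => by
      simp [moiChain, hU' 0 ψ]
  | n + 1, U', hU', V, ψ => by
      have ih := moiChain_norm_apply_le n (fun i => U' i.succ) (fun j φ => hU' j.succ φ)
        (fun i => V i.succ) ψ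
      calc ‖moiChain (n+1) U' V ψ‖
          = ‖V 0 (moiChain n (fun i => U' i.succ) (fun i => V i.succ) ψ)‖ := by
            simp [moiChain, hU' 0]
        _ ≤ ‖V 0‖ * ‖moiChain n (fun i => U' i.succ) (fun i => V i.succ) ψ‖ :=
            (V 0).le_opNorm _
        _ ≤ ‖V 0‖ * ((∏ j : Fin n, ‖V j.succ‖) * ‖ψ‖) := by
            exact mul_le_mul_of_nonneg_left ih (norm_nonneg _)
        _ = (∏ j, ‖V j‖) * ‖ψ‖ := by
            rw [Fin.prod_univ_succ, mul_assoc]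

lemma moiChain_continuous {α : Type*} [TopologicalSpace α] :
    ∀ (n : ℕ) (c : Fin (n + 1) → α → (ℋ →L[ℂ] ℋ))
    (_ : ∀ j, Continuous fun p : α × ℋ => c j p.1 p.2) (V : Fin n → (ℋ →L[ℂ] ℋ)) (ψ : ℋ),
    Continuous fun a => moiChain n (fun j => c j a) V ψ
  | 0, c, hc, V, ψ => by
      simpa [moiChain, Function.comp_def] using (hc 0).comp (continuous_id.prodMk continuous_const)
  | n + 1, c, hc, V, ψ => by
      have ih := moiChain_continuous n (fun j a => c j.succ a) (fun j => hc j.succ)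
        (fun i => V i.succ) ψ
      have h1 : Continuous fun a => (V 0) (moiChain n (fun j => c j.succ a)
          (fun i => V i.succ) ψ) := (V 0).continuous.comp ih
      have : Continuous fun a => c 0 a ((V 0) (moiChain n (fun j => c j.succ a)
          (fun i => V i.succ) ψ)) := (hc 0).comp (continuous_id.prodMk h1)
      simpa [moiChain] using this

lemma unitary_joint_continuous (U : ℝ → (ℋ →L[ℂ] ℋ))
    (hiso : ∀ (s : ℝ) (ψ : ℋ), ‖U s ψ‖ = ‖ψ‖)
    (hcont : ∀ ψ : ℋ, Continuous fun s => U s ψ) :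
    Continuous fun p : ℝ × ℋ => U p.1 p.2 := by
  rw [continuous_iff_continuousAt]
  rintro ⟨s₀, ψ₀⟩
  rw [ContinuousAt, tendsto_iff_dist_tendsto_zero]
  have hb : ∀ p : ℝ × ℋ, dist (U p.1 p.2) (U s₀ ψ₀) ≤
      dist p.2 ψ₀ + dist (U p.1 ψ₀) (U s₀ ψ₀) := by
    intro p
    have h1 : dist (U p.1 p.2) (U p.1 ψ₀) = dist p.2 ψ₀ := by
      rw [dist_eq_norm, dist_eq_norm, ← map_sub, hiso]
    calc dist (U p.1 p.2) (U s₀ ψ₀)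
        ≤ dist (U p.1 p.2) (U p.1 ψ₀) + dist (U p.1 ψ₀) (U s₀ ψ₀) := dist_triangle _ _ _
      _ = dist p.2 ψ₀ + dist (U p.1 ψ₀) (U s₀ ψ₀) := by rw [h1]
  have ht : Filter.Tendsto (fun p : ℝ × ℋ => dist p.2 ψ₀ + dist (U p.1 ψ₀) (U s₀ ψ₀))
      (nhds (s₀, ψ₀)) (nhds 0) := by
    have t1 : Filter.Tendsto (fun p : ℝ × ℋ => dist p.2 ψ₀) (nhds (s₀, ψ₀)) (nhds 0) := by
      have : Continuous fun p : ℝ × ℋ => dist p.2 ψ₀ :=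
        continuous_snd.dist continuous_const
      simpa using this.tendsto (s₀, ψ₀)
    have t2 : Filter.Tendsto (fun p : ℝ × ℋ => dist (U p.1 ψ₀) (U s₀ ψ₀))
        (nhds (s₀, ψ₀)) (nhds 0) := by
      have : Continuous fun p : ℝ × ℋ => dist (U p.1 ψ₀) (U s₀ ψ₀) :=
        ((hcont ψ₀).comp continuous_fst).dist continuous_const
      simpa using this.tendsto (s₀, ψ₀)
    simpa using t1.add t2
  exact squeeze_zero (fun _ => dist_nonneg) hb ht

lemma isClosed_simplexSet (n : ℕ) (c : ℝ) :
    IsClosed {t : Fin n → ℝ | (∀ i, 0 ≤ t i) ∧ ∑ i, t i ≤ c} := by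
  have h1 : IsClosed {t : Fin n → ℝ | ∀ i, 0 ≤ t i} := by
    have : {t : Fin n → ℝ | ∀ i, 0 ≤ t i} = ⋂ i, (fun t => t i) ⁻¹' Set.Ici 0 := by
      ext t; simp [Set.mem_iInter]
    rw [this]
    exact isClosed_iInter fun i => isClosed_Ici.preimage (continuous_apply i)
  have h2 : IsClosed {t : Fin n → ℝ | ∑ i, t i ≤ c} :=
    IsClosed.preimage (by continuity : Continuous fun t : Fin n → ℝ => ∑ i, t i) isClosed_Iic
  exact h1.inter h2

lemma volume_simplexSet (n : ℕ) : ∀ c : ℝ, 0 ≤ c →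
    volume {t : Fin n → ℝ | (∀ i, 0 ≤ t i) ∧ ∑ i, t i ≤ c}
      = ENNReal.ofReal (c ^ n / n.factorial) := by
  induction n with
  | zero =>
    intro c hc
    have : {t : Fin 0 → ℝ | (∀ i, 0 ≤ t i) ∧ ∑ i, t i ≤ c} = Set.univ := by
      ext t; simp [hc]
    rw [this]
    simp [MeasureTheory.volume_pi, Measure.pi_univ]
  | succ n ih =>
    intro c hc
    have e := MeasureTheory.volume_preserving_piFinSuccAbove (fun _ : Fin (n+1) => ℝ) 0
    set A : Set (ℝ × (Fin n → ℝ)) :=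
      {p | (0 ≤ p.1 ∧ ∀ i, 0 ≤ p.2 i) ∧ p.1 + ∑ i, p.2 i ≤ c} with hA
    have hAm : MeasurableSet A := by
      have : A = {p : ℝ × (Fin n → ℝ) | 0 ≤ p.1} ∩ {p | ∀ i, 0 ≤ p.2 i} ∩ {p | p.1 + ∑ i, p.2 i ≤ c} := by
        ext p; simp [hA, and_assoc]
      rw [this]
      refine (MeasurableSet.inter (MeasurableSet.inter ?_ ?_) ?_)
      · exact measurableSet_le measurable_const measurable_fst
      · have : {p : ℝ × (Fin n → ℝ) | ∀ i, 0 ≤ p.2 i} = ⋂ i, {p : ℝ × (Fin n → ℝ) | 0 ≤ p.2 i} := by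
          ext p; simp [Set.mem_iInter]
        rw [this]
        exact MeasurableSet.iInter fun i =>
          measurableSet_le measurable_const (measurable_snd.eval)
      · exact measurableSet_le (measurable_fst.add (by
          exact Finset.measurable_sum _ fun i _ => (measurable_pi_apply i).comp measurable_snd)) measurable_const
    have hpre : (MeasurableEquiv.piFinSuccAbove (fun _ : Fin (n+1) => ℝ) 0) ⁻¹' A
        = {t : Fin (n+1) → ℝ | (∀ i, 0 ≤ t i) ∧ ∑ i, t i ≤ c} := by
      ext t
      simp only [Set.mem_preimage, MeasurableEquiv.piFinSuccAbove_apply, hA, Set.mem_setOf_eq]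
      constructor
      · rintro ⟨⟨h0, hs⟩, hsum⟩
        refine ⟨fun i => ?_, ?_⟩
        · rcases Fin.eq_zero_or_eq_succ i with rfl | ⟨j, rfl⟩
          · exact h0
          · simpa [Fin.tail] using hs j
        · rw [Fin.sum_univ_succ]
          simpa [Fin.tail] using hsum
      · rintro ⟨h0, hsum⟩
        refine ⟨⟨h0 0, fun i => by simpa [Fin.tail] using h0 _⟩, ?_⟩
        rw [Fin.sum_univ_succ] at hsum
        simpa [Fin.tail] using hsum
    have key : volume {t : Fin (n+1) → ℝ | (∀ i, 0 ≤ t i) ∧ ∑ i, t i ≤ c}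
        = (volume : Measure (ℝ × (Fin n → ℝ))) A := by
      rw [← hpre]
      exact e.measure_preimage hAm.nullMeasurableSet
    rw [key]
    have hslice : ∀ x : ℝ, Prod.mk x ⁻¹' A
        = if x ∈ Set.Icc (0:ℝ) c then {t : Fin n → ℝ | (∀ i, 0 ≤ t i) ∧ ∑ i, t i ≤ c - x} else ∅ := by
      intro x
      split_ifs with hx
      · ext t
        simp only [Set.mem_preimage, hA, Set.mem_setOf_eq]
        constructor
        · rintro ⟨⟨_, hs⟩, hsum⟩; exact ⟨hs, by linarith⟩
        · rintro ⟨hs, hsum⟩; exact ⟨⟨hx.1, hs⟩, by linarith⟩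
      · ext t
        simp only [Set.mem_preimage, hA, Set.mem_setOf_eq, Set.mem_empty_iff_false, iff_false]
        rintro ⟨⟨h0, hs⟩, hsum⟩
        have : ∑ i, t i ≥ 0 := Finset.sum_nonneg fun i _ => hs i
        simp only [Set.mem_Icc, not_and_or, not_le] at hx
        rcases hx with hx | hx
        · linarith
        · linarith
    rw [show (volume : Measure (ℝ × (Fin n → ℝ))) = (volume : Measure ℝ).prod volume from rfl,
      Measure.prod_apply hAm]
    have hcalc : (∫⁻ x : ℝ, volume (Prod.mk x ⁻¹' A))
        = ∫⁻ x : ℝ, Set.indicator (Set.Icc 0 c) (fun x => ENNReal.ofReal ((c - x) ^ n / n.factorial)) x := by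
      congr 1; ext x
      rw [hslice x]
      by_cases hx : x ∈ Set.Icc (0:ℝ) c
      · rw [if_pos hx, Set.indicator_of_mem hx, ih (c - x) (by linarith [hx.2])]
      · rw [if_neg hx, Set.indicator_of_notMem hx]; simp
    rw [hcalc, lintegral_indicator measurableSet_Icc]
    have hnonneg : ∀ x ∈ Set.Icc (0:ℝ) c, 0 ≤ (c - x) ^ n / n.factorial := by
      intro x hx
      exact div_nonneg (pow_nonneg (by linarith [hx.2]) n) (Nat.cast_nonneg _)
    rw [← ofReal_integral_eq_lintegral_ofReal]
    · congr 1
      have : ∫ x in Set.Icc (0:ℝ) c, (c - x) ^ n / n.factorial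
          = (∫ x in Set.Icc (0:ℝ) c, (c - x) ^ n) / n.factorial := by
        rw [integral_div]
      rw [this]
      have : ∫ x in Set.Icc (0:ℝ) c, (c - x) ^ n = ∫ x in (0:ℝ)..c, (c - x) ^ n := by
        rw [intervalIntegral.integral_of_le hc, ← MeasureTheory.integral_Icc_eq_integral_Ioc]
      rw [this]
      have hsub : ∫ x in (0:ℝ)..c, (c - x) ^ n = ∫ x in (0:ℝ)..c, x ^ n := by
        have := intervalIntegral.integral_comp_sub_left (a := (0:ℝ)) (b := c) (fun x => x ^ n) c
        simpa using this
      rw [hsub, integral_pow]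
      rw [Nat.factorial_succ]
      push_cast
      field_simp
      simp
    · apply Continuous.integrableOn_Icc
      fun_prop
    · exact (ae_restrict_iff' measurableSet_Icc).2 (Filter.Eventually.of_forall hnonneg)


noncomputable def moiChainFam (n : ℕ) (U : Fin (n + 1) → ℝ → (ℋ →L[ℂ] ℋ))
    (V : Fin n → (ℋ →L[ℂ] ℋ)) (x : ℝ) (t : Fin n → ℝ) : ℋ →L[ℂ] ℋ :=
  moiChain n (fun j => U j (((Fin.cons (1 - ∑ i, t i) t : Fin (n + 1) → ℝ) j) * x)) V


set_option maxHeartbeats 1000000 in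
/-- Let `H₀,…,Hₙ` be self-adjoint with unitary groups `e^{isxHⱼ}`
(encoded by isometric operator families `U j`), let `f^{(n)}` be the Fourier transform of a
finite complex measure (finite measure `μ` with integrable density `ρ`), and let
`V₁,…,Vₙ` be bounded operators. Then the multiple operator integral
`T(V₁,…,Vₙ)ψ = ∫_ℝ ∫_{Δₙ} e^{is₀xH₀}V₁e^{is₁xH₁}⋯Vₙe^{isₙxHₙ}ψ ds dμ(x)` defines a bounded
operator with `‖T‖ ≤ (1/n!) ‖μ‖ ∏ⱼ ‖Vⱼ‖`, where `‖μ‖ = ∫ ‖ρ‖ dμ` is the total variation and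
the simplex `Δₙ` is parametrized by `{t ∈ ℝⁿ : tᵢ ≥ 0, Σtᵢ ≤ 1}` via
`s = (1 - Σtᵢ, t₁,…,tₙ)`. -/
theorem moi_norm_bound
    (n : ℕ)
    (U : Fin (n + 1) → ℝ → (ℋ →L[ℂ] ℋ))
    (hU0 : ∀ j, U j 0 = 1)
    (hUgrp : ∀ j (s t : ℝ), U j (s + t) = (U j s).comp (U j t))
    (hUiso : ∀ j (s : ℝ) (ψ : ℋ), ‖U j s ψ‖ = ‖ψ‖)
    (hUcont : ∀ j (ψ : ℋ), Continuous fun s => U j s ψ)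
    (μ : Measure ℝ) [IsFiniteMeasure μ] (ρ : ℝ → ℂ) (hρ : Integrable ρ μ)
    (V : Fin n → (ℋ →L[ℂ] ℋ)) :
    ∃ T : ℋ →L[ℂ] ℋ,
      (∀ ψ : ℋ,
        T ψ = ∫ x,
            ρ x •
              (∫ t in {t : Fin n → ℝ | (∀ i, 0 ≤ t i) ∧ ∑ i, t i ≤ 1},
                (moiChain n
                    (fun j =>
                      U j (((Fin.cons (1 - ∑ i, t i) t : Fin (n + 1) → ℝ) j) * x))
                    V) ψ) ∂μ) ∧
      ‖T‖ ≤ (1 / n.factorial : ℝ) * (∫ x, ‖ρ x‖ ∂μ) * ∏ j, ‖V j‖ := by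
  classical
  set S : Set (Fin n → ℝ) := {t | (∀ i, 0 ≤ t i) ∧ ∑ i, t i ≤ 1} with hSdef
  set chain : ℝ → (Fin n → ℝ) → (ℋ →L[ℂ] ℋ) := moiChainFam n U V with hchain
  have hC : ∀ (x : ℝ) (t : Fin n → ℝ) (ψ : ℋ), ‖chain x t ψ‖ ≤ (∏ j, ‖V j‖) * ‖ψ‖ := by
    intro x t ψ
    rw [hchain]
    exact moiChain_norm_apply_le n _ (fun j φ => hUiso j _ φ) V ψ
  have hcontP : ∀ ψ : ℋ, Continuous fun p : ℝ × (Fin n → ℝ) => chain p.1 p.2 ψ := by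
    intro ψ
    rw [hchain]
    unfold moiChainFam
    refine moiChain_continuous n
      (fun (j : Fin (n + 1)) (p : ℝ × (Fin n → ℝ)) =>
        U j (((Fin.cons (1 - ∑ i, p.2 i) p.2 : Fin (n + 1) → ℝ) j) * p.1))
      (fun j => ?_) V ψ
    have hf : Continuous fun p : ℝ × (Fin n → ℝ) =>
        ((Fin.cons (1 - ∑ i, p.2 i) p.2 : Fin (n + 1) → ℝ) j) * p.1 := by
      refine Continuous.mul ?_ continuous_fst
      induction j using Fin.cases with
      | zero =>
        simp only [Fin.cons_zero]
        exact continuous_const.sub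
          (continuous_finset_sum _ fun i _ => (continuous_apply i).comp continuous_snd)
      | succ i =>
        simp only [Fin.cons_succ]
        exact (continuous_apply i).comp continuous_snd
    exact (unitary_joint_continuous (U j) (hUiso j) (hUcont j)).comp
      ((hf.comp continuous_fst).prodMk continuous_snd)
  have hSclosed : IsClosed S := isClosed_simplexSet n 1
  have hScomp : IsCompact S := by
    refine IsCompact.of_isClosed_subset (isCompact_Icc (a := (0 : Fin n → ℝ)) (b := 1))
      hSclosed ?_
    intro t ht
    refine Set.mem_Icc.2 ⟨fun i => ht.1 i, fun i => ?_⟩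
    calc t i ≤ ∑ i, t i := Finset.single_le_sum (fun i _ => ht.1 i) (Finset.mem_univ i)
      _ ≤ 1 := ht.2
  have hSvol : volume S = ENNReal.ofReal (1 / n.factorial) := by
    simpa using volume_simplexSet n 1 zero_le_one
  have hSlt : volume S < ⊤ := by rw [hSvol]; exact ENNReal.ofReal_lt_top
  have hint : ∀ (x : ℝ) (ψ : ℋ), IntegrableOn (fun t => chain x t ψ) S volume := by
    intro x ψ
    exact (((hcontP ψ).comp (Continuous.prodMk_right x)).continuousOn).integrableOn_compact hScomp
  have hg : ∀ (ψ : ℋ) (x : ℝ), ‖∫ t in S, chain x t ψ‖ ≤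
      (1 / n.factorial : ℝ) * ((∏ j, ‖V j‖) * ‖ψ‖) := by
    intro ψ x
    have := norm_setIntegral_le_of_norm_le_const (μ := volume) (s := S) hSlt
      (fun t _ => hC x t ψ)
    calc ‖∫ t in S, chain x t ψ‖ ≤ ((∏ j, ‖V j‖) * ‖ψ‖) * (volume S).toReal := this
      _ = (1 / n.factorial : ℝ) * ((∏ j, ‖V j‖) * ‖ψ‖) := by
          rw [hSvol, ENNReal.toReal_ofReal (by positivity)]; ring
  have hmeas : ∀ ψ : ℋ, StronglyMeasurable fun x : ℝ => ∫ t in S, chain x t ψ := by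
    intro ψ
    exact ((hcontP ψ).stronglyMeasurable).integral_prod_right'
  have houter : ∀ ψ : ℋ, Integrable (fun x => ρ x • ∫ t in S, chain x t ψ) μ := by
    intro ψ
    refine Integrable.mono'
      (hρ.norm.mul_const ((1 / n.factorial : ℝ) * ((∏ j, ‖V j‖) * ‖ψ‖)))
      (hρ.1.smul (hmeas ψ).aestronglyMeasurable) ?_
    refine Filter.Eventually.of_forall fun x => ?_
    rw [norm_smul]
    exact mul_le_mul_of_nonneg_left (hg ψ x) (norm_nonneg _)
  let L : ℋ →ₗ[ℂ] ℋ :=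
    { toFun := fun ψ => ∫ x, ρ x • (∫ t in S, chain x t ψ) ∂μ
      map_add' := by
        intro ψ φ
        have h1 : ∀ x : ℝ, (∫ t in S, chain x t (ψ + φ)) =
            (∫ t in S, chain x t ψ) + ∫ t in S, chain x t φ := by
          intro x
          rw [← integral_add (hint x ψ) (hint x φ)]
          exact integral_congr_ae (Filter.Eventually.of_forall fun t => map_add _ _ _)
        simp only [h1, smul_add]
        exact integral_add (houter ψ) (houter φ)
      map_smul' := by
        intro c ψ
        have h1 : ∀ x : ℝ, (∫ t in S, chain x t (c • ψ)) = c • ∫ t in S, chain x t ψ := by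
          intro x
          rw [← integral_smul]
          exact integral_congr_ae (Filter.Eventually.of_forall fun t => map_smul _ _ _)
        simp only [h1, RingHom.id_apply]
        rw [← integral_smul]
        exact integral_congr_ae (Filter.Eventually.of_forall fun x => (smul_comm _ _ _))
      }
  have hbound : ∀ ψ : ℋ, ‖L ψ‖ ≤
      ((1 / n.factorial : ℝ) * (∫ x, ‖ρ x‖ ∂μ) * ∏ j, ‖V j‖) * ‖ψ‖ := by
    intro ψ
    calc ‖∫ x, ρ x • (∫ t in S, chain x t ψ) ∂μ‖
        ≤ ∫ x, ‖ρ x • (∫ t in S, chain x t ψ)‖ ∂μ := norm_integral_le_integral_norm _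
      _ ≤ ∫ x, ‖ρ x‖ * ((1 / n.factorial : ℝ) * ((∏ j, ‖V j‖) * ‖ψ‖)) ∂μ := by
          refine integral_mono (houter ψ).norm (hρ.norm.mul_const _) fun x => ?_
          rw [norm_smul]
          exact mul_le_mul_of_nonneg_left (hg ψ x) (norm_nonneg _)
      _ = ((1 / n.factorial : ℝ) * (∫ x, ‖ρ x‖ ∂μ) * ∏ j, ‖V j‖) * ‖ψ‖ := by
          rw [integral_mul_const]; ring
  refine ⟨LinearMap.mkContinuous L _ hbound, fun ψ => rfl, ?_⟩
  refine LinearMap.mkContinuous_norm_le L ?_ hbound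
  have h1 : (0:ℝ) ≤ ∫ x, ‖ρ x‖ ∂μ := integral_nonneg fun x => norm_nonneg _
  have h2 : (0:ℝ) ≤ ∏ j, ‖V j‖ := Finset.prod_nonneg fun j _ => norm_nonneg _
  positivity
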